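/- Let r ≥ 1 and let M_1,…,M_r, N_1,…,N_r ∈ ℂ^{n×n} with every N_i invertible, and set Π = M_r N_r^{−1} M_{r−1} N_{r−1}^{−1} ⋯ M_1 N_1^{−1}. Define the rn×rn pencil Q₁(λ), with r×r block structure of n×n blocks, by: the (i,i) block is λ·M_{r+1−i} for i = 1,…,r, the (i+1,i) block is −N_{r+1−i} for i = 1,…,r−1, the (1,r) block is −N_1, and all other blocks are zero. Then det Q₁(0) ≠ 0 (in particular Q₁ is a regular pencil), and for every nonzero λ₀ ∈ ℂ one has det Q₁(λ₀) = 0 if and only if λ₀^{−r} is an eigenvalue of the matrix Π. -/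

import Mathlib

open Matrix

/-- The `rn × rn` block pencil `Q₁(λ)`: block `(i,i)` is `λ·M_{r+1-i}`, block `(i+1,i)` is
`-N_{r+1-i}` for `i = 1,…,r-1`, block `(1,r)` is `-N_1`, all other blocks zero. -/
def pencilQ1 (r n : ℕ) (M N : Fin r → Matrix (Fin n) (Fin n) ℂ) (μ : ℂ) :
    Matrix (Fin r × Fin n) (Fin r × Fin n) ℂ :=
  Matrix.of fun p q =>
    (if p.1 = q.1 then μ * M p.1.rev p.2 q.2 else 0) +
    (if (p.1 : ℕ) = (q.1 : ℕ) + 1 ∨ ((p.1 : ℕ) = 0 ∧ (q.1 : ℕ) = r - 1) then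
      -(N q.1.rev p.2 q.2) else 0)

/-- The formal matrix product `Π = M_r N_r⁻¹ M_{r-1} N_{r-1}⁻¹ ⋯ M_1 N_1⁻¹`. -/
noncomputable def formalProd (r n : ℕ) (M N : Fin r → Matrix (Fin n) (Fin n) ℂ) :
    Matrix (Fin n) (Fin n) ℂ :=
  (List.ofFn fun i : Fin r => M i.rev * (N i.rev)⁻¹).prod

private lemma fin_mk_add_one (m a : ℕ) (h : a < m) :
    (⟨a, Nat.lt_succ_of_lt h⟩ : Fin (m+1)) + 1 = ⟨a+1, Nat.succ_lt_succ h⟩ := by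
  apply Fin.ext
  rw [Fin.val_add_one]
  split_ifs with hl
  · have : a = m := by have := congrArg Fin.val hl; simpa using this
    omega
  · rfl

private lemma cond_iff (m : ℕ) (p q : Fin (m+1)) :
    ((p:ℕ) = (q:ℕ) + 1 ∨ ((p:ℕ) = 0 ∧ (q:ℕ) = (m+1) - 1)) ↔ q = p - 1 := by
  have hp := p.isLt
  have hq := q.isLt
  rw [eq_sub_iff_add_eq, Fin.ext_iff, Fin.val_add_one]
  split_ifs with h
  · have : (q:ℕ) = m := by rw [h]; simp
    omega
  · have : (q:ℕ) ≠ m := fun hq' => h (Fin.ext (by simpa using hq'))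
    omega

private lemma sum_ite_const {α : Type*} [Fintype α] (f : α → ℂ) (c : Prop) [Decidable c] :
    (∑ j, if c then f j else 0) = if c then ∑ j, f j else 0 := by
  split <;> simp

private lemma pencil_mulVec (m n : ℕ) (M N : Fin (m+1) → Matrix (Fin n) (Fin n) ℂ) (μ : ℂ)
    (x : Fin (m+1) × Fin n → ℂ) (p : Fin (m+1)) (k : Fin n) :
    (pencilQ1 (m+1) n M N μ *ᵥ x) (p, k)
      = μ * (M p.rev *ᵥ fun j => x (p, j)) k - (N (p-1).rev *ᵥ fun j => x (p-1, j)) k := by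
  simp only [mulVec, dotProduct, pencilQ1, of_apply, Fintype.sum_prod_type_right,
    add_mul, ite_mul, zero_mul, neg_mul, Finset.sum_add_distrib, cond_iff]
  rw [Finset.sum_comm]
  simp only [sum_ite_const, Finset.sum_ite_eq, Finset.sum_ite_eq', Finset.mem_univ, if_true,
    Finset.mul_sum, ← Finset.sum_neg_distrib, sub_eq_add_neg, mul_assoc]

private lemma vanish {n : ℕ} (B : Matrix (Fin n) (Fin n) ℂ) (hB : IsUnit B.det)
    {v : Fin n → ℂ} (h : B *ᵥ v = 0) : v = 0 := by
  have h2 := congrArg (fun u => B⁻¹ *ᵥ u) h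
  simpa [mulVec_mulVec, nonsing_inv_mul B hB] using h2

private lemma system_iff (m n : ℕ) (M N : Fin (m+1) → Matrix (Fin n) (Fin n) ℂ)
    (hN : ∀ i, IsUnit (N i).det) (μ : ℂ) (x : Fin (m+1) × Fin n → ℂ) :
    pencilQ1 (m+1) n M N μ *ᵥ x = 0 ↔
      ∀ q : Fin (m+1), (N q.rev *ᵥ fun k => x (q, k)) =
        μ • ((M (q+1).rev * (N (q+1).rev)⁻¹) *ᵥ (N (q+1).rev *ᵥ fun k => x (q+1, k))) := by
  have hA : ∀ (q : Fin (m+1)) (v : Fin n → ℂ),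
      (M q.rev * (N q.rev)⁻¹) *ᵥ (N q.rev *ᵥ v) = M q.rev *ᵥ v := by
    intro q v
    rw [mulVec_mulVec, mul_assoc, nonsing_inv_mul _ (hN _), mul_one]
  constructor
  · intro h q
    rw [hA]
    funext k
    have h1 := congrFun h (q + 1, k)
    rw [pencil_mulVec] at h1
    simp only [Pi.zero_apply, add_sub_cancel_right] at h1
    rw [Pi.smul_apply, smul_eq_mul]
    exact (sub_eq_zero.mp h1).symm
  · intro h
    funext pk
    obtain ⟨p, k⟩ := pk
    have h1 := h (p - 1)
    rw [hA, sub_add_cancel] at h1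
    have h2 := congrFun h1 k
    rw [Pi.smul_apply, smul_eq_mul] at h2
    show (pencilQ1 (m+1) n M N μ *ᵥ x) (p, k) = 0
    rw [pencil_mulVec, ← h2, sub_self]

private noncomputable def TP {n : ℕ} (m : ℕ) (A : Fin (m+1) → Matrix (Fin n) (Fin n) ℂ)
    (a k : ℕ) : Matrix (Fin n) (Fin n) ℂ :=
  ((List.range' a k).map fun j => if h : j < m+1 then A ⟨j, h⟩ else 1).prod

private lemma TP_zero {n : ℕ} (m : ℕ) (A : Fin (m+1) → Matrix (Fin n) (Fin n) ℂ) (a : ℕ) :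
    TP m A a 0 = 1 := by simp [TP]

private lemma TP_succ {n : ℕ} (m : ℕ) (A : Fin (m+1) → Matrix (Fin n) (Fin n) ℂ) (a k : ℕ)
    (h : a < m + 1) :
    TP m A a (k+1) = A ⟨a, h⟩ * TP m A (a+1) k := by
  rw [TP, List.range'_succ, List.map_cons, List.prod_cons, dif_pos h]
  rfl

private lemma TP_full {n : ℕ} (m : ℕ) (A : Fin (m+1) → Matrix (Fin n) (Fin n) ℂ) :
    TP m A 0 (m+1) = (List.ofFn A).prod := by
  rw [TP, ← List.range_eq_range', ← (show (List.finRange (m+1)).map Fin.val = List.range (m+1) from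
    List.ext_getElem (by simp) (by simp)), List.map_map, List.ofFn_eq_map]
  congr 1
  apply List.map_congr_left
  intro i _
  simp [show ¬ (m < (i:ℕ)) by have := i.isLt; omega]

private lemma A0_TP {n : ℕ} (m : ℕ) (A : Fin (m+1) → Matrix (Fin n) (Fin n) ℂ) :
    A 0 * TP m A 1 m = (List.ofFn A).prod := by
  rw [← TP_full m A, TP_succ m A 0 m m.succ_pos]
  norm_num

private lemma chain {n : ℕ} (m : ℕ) (A : Fin (m+1) → Matrix (Fin n) (Fin n) ℂ)
    (y : Fin (m+1) → Fin n → ℂ) (μ : ℂ)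
    (hS : ∀ q, y q = μ • (A (q + 1) *ᵥ y (q + 1))) (k : ℕ) :
    k ≤ m → y ⟨m - k, by omega⟩ =
      μ ^ k • (TP m A (m+1-k) k *ᵥ y ⟨m, Nat.lt_succ_self m⟩) := by
  induction k with
  | zero => intro _; simp [TP_zero]
  | succ k ih =>
    intro hk
    have ihk := ih (by omega)
    have e1 : (⟨m - (k+1), by omega⟩ : Fin (m+1)) + 1 = ⟨m - k, by omega⟩ := by
      rw [fin_mk_add_one m (m - (k+1)) (by omega)]
      exact Fin.ext (by simp; omega)
    rw [hS ⟨m - (k+1), by omega⟩, e1, ihk, mulVec_smul, smul_smul, ← pow_succ', mulVec_mulVec]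
    congr 2
    rw [show m + 1 - (k+1) = m - k by omega,
      TP_succ m A (m - k) k (by omega), show m - k + 1 = m + 1 - k by omega]

private lemma chain' {n : ℕ} (m : ℕ) (A : Fin (m+1) → Matrix (Fin n) (Fin n) ℂ)
    (y : Fin (m+1) → Fin n → ℂ) (μ : ℂ)
    (hS : ∀ q, y q = μ • (A (q + 1) *ᵥ y (q + 1))) (q : Fin (m+1)) :
    y q = μ ^ (m - (q:ℕ)) • (TP m A ((q:ℕ)+1) (m - (q:ℕ)) *ᵥ y ⟨m, Nat.lt_succ_self m⟩) := by
  have h0 := chain m A y μ hS (m - (q:ℕ)) (by omega)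
  have e : (⟨m - (m - (q:ℕ)), by omega⟩ : Fin (m+1)) = q := Fin.ext (by simp; omega)
  rw [e, show m + 1 - (m - (q:ℕ)) = (q:ℕ) + 1 by omega] at h0
  exact h0

private lemma fin_last_add_one {m : ℕ} :
    (⟨m, Nat.lt_succ_self m⟩ : Fin (m+1)) + 1 = 0 := by
  apply Fin.ext
  rw [Fin.val_add_one]
  simp [Fin.last]

private lemma cycle {n : ℕ} (m : ℕ) (A : Fin (m+1) → Matrix (Fin n) (Fin n) ℂ)
    (y : Fin (m+1) → Fin n → ℂ) (μ : ℂ)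
    (hS : ∀ q, y q = μ • (A (q + 1) *ᵥ y (q + 1))) :
    y ⟨m, Nat.lt_succ_self m⟩
      = μ ^ (m+1) • ((List.ofFn A).prod *ᵥ y ⟨m, Nat.lt_succ_self m⟩) := by
  have h0 := chain' m A y μ hS 0
  rw [show ((0 : Fin (m+1)) : ℕ) = 0 from rfl, Nat.sub_zero, Nat.zero_add] at h0
  have h1 := hS ⟨m, Nat.lt_succ_self m⟩
  rw [fin_last_add_one, h0, mulVec_smul, smul_smul, ← pow_succ', mulVec_mulVec, A0_TP] at h1
  exact h1

private lemma construct {n : ℕ} (m : ℕ) (A : Fin (m+1) → Matrix (Fin n) (Fin n) ℂ) (μ : ℂ)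
    (w : Fin n → ℂ) (hw : w = μ ^ (m+1) • ((List.ofFn A).prod *ᵥ w)) :
    ∃ y : Fin (m+1) → Fin n → ℂ, y ⟨m, Nat.lt_succ_self m⟩ = w ∧
      ∀ q, y q = μ • (A (q + 1) *ᵥ y (q + 1)) := by
  refine ⟨fun q => μ ^ (m - (q:ℕ)) • (TP m A ((q:ℕ)+1) (m - (q:ℕ)) *ᵥ w), ?_, ?_⟩
  · simp [TP_zero]
  · intro q
    rcases Nat.lt_or_ge (q:ℕ) m with hq | hq
    · have e1 : q + 1 = ⟨(q:ℕ) + 1, Nat.succ_lt_succ hq⟩ := by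
        conv_lhs => rw [show q = (⟨(q:ℕ), q.isLt⟩ : Fin (m+1)) from Fin.ext rfl]
        rw [fin_mk_add_one m (q:ℕ) hq]
      rw [e1]
      simp only [Fin.val_mk]
      rw [mulVec_smul, smul_smul, ← pow_succ', mulVec_mulVec,
        ← TP_succ m A ((q:ℕ)+1) (m - ((q:ℕ)+1)) (by omega),
        show m - ((q:ℕ)+1) + 1 = m - (q:ℕ) by omega]
    · have hq' : q = ⟨m, Nat.lt_succ_self m⟩ := Fin.ext (by simp only [Fin.val_mk]; omega)
      rw [hq', fin_last_add_one]
      simp only [Fin.val_mk, show ((0 : Fin (m+1)) : ℕ) = 0 from rfl, Nat.sub_self,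
        Nat.sub_zero, Nat.zero_add, pow_zero, one_smul, TP_zero, one_mulVec]
      rw [mulVec_smul, smul_smul, ← pow_succ', mulVec_mulVec, A0_TP]
      exact hw

private lemma key (m n : ℕ) (M N : Fin (m+1) → Matrix (Fin n) (Fin n) ℂ)
    (hN : ∀ i, IsUnit (N i).det) (μ : ℂ) (hμ : μ ≠ 0) :
    ((pencilQ1 (m+1) n M N μ).det = 0 ↔
      (formalProd (m+1) n M N - (μ ^ (m+1))⁻¹ • 1).det = 0) := by
  have hpow : (μ:ℂ) ^ (m+1) ≠ 0 := pow_ne_zero _ hμ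
  rw [← Matrix.exists_mulVec_eq_zero_iff, ← Matrix.exists_mulVec_eq_zero_iff]
  constructor
  · rintro ⟨x, hx0, hx⟩
    have hS := (system_iff m n M N hN μ x).mp hx
    have hcyc : (N (⟨m, Nat.lt_succ_self m⟩ : Fin (m+1)).rev *ᵥ
          fun k => x (⟨m, Nat.lt_succ_self m⟩, k))
        = μ ^ (m+1) • (formalProd (m+1) n M N *ᵥ
            (N (⟨m, Nat.lt_succ_self m⟩ : Fin (m+1)).rev *ᵥ
              fun k => x (⟨m, Nat.lt_succ_self m⟩, k))) :=
      cycle m (fun i => M i.rev * (N i.rev)⁻¹) (fun q => N q.rev *ᵥ fun k => x (q, k)) μ hS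
    refine ⟨N (⟨m, Nat.lt_succ_self m⟩ : Fin (m+1)).rev *ᵥ
        fun k => x (⟨m, Nat.lt_succ_self m⟩, k), ?_, ?_⟩
    · intro h0
      apply hx0
      have hally : ∀ q : Fin (m+1), (N q.rev *ᵥ fun k => x (q, k)) = 0 := by
        intro q
        have hq := chain' m (fun i => M i.rev * (N i.rev)⁻¹)
          (fun q => N q.rev *ᵥ fun k => x (q, k)) μ hS q
        rw [h0] at hq
        simpa using hq
      funext pk
      obtain ⟨q, k⟩ := pk
      exact congrFun (vanish (N q.rev) (hN _) (hally q)) k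
    · rw [sub_mulVec, smul_mulVec, one_mulVec, sub_eq_zero]
      have h2 : (μ ^ (m+1))⁻¹ • (N (⟨m, Nat.lt_succ_self m⟩ : Fin (m+1)).rev *ᵥ
            fun k => x (⟨m, Nat.lt_succ_self m⟩, k))
          = formalProd (m+1) n M N *ᵥ (N (⟨m, Nat.lt_succ_self m⟩ : Fin (m+1)).rev *ᵥ
            fun k => x (⟨m, Nat.lt_succ_self m⟩, k)) := by
        conv_lhs => rw [hcyc]
        rw [smul_smul, inv_mul_cancel₀ hpow, one_smul]
      exact h2.symm
  · rintro ⟨v, hv0, hv⟩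
    rw [sub_mulVec, smul_mulVec, one_mulVec, sub_eq_zero] at hv
    have hv' : v = μ ^ (m+1) • ((List.ofFn fun i : Fin (m+1) =>
        M i.rev * (N i.rev)⁻¹).prod *ᵥ v) := by
      show v = μ ^ (m+1) • (formalProd (m+1) n M N *ᵥ v)
      rw [hv, smul_smul, mul_inv_cancel₀ hpow, one_smul]
    obtain ⟨y, hym, hS⟩ := construct m (fun i => M i.rev * (N i.rev)⁻¹) μ v hv'
    refine ⟨fun p => ((N p.1.rev)⁻¹ *ᵥ y p.1) p.2, ?_, ?_⟩
    · intro h0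
      apply hv0
      have h2 : (N (⟨m, Nat.lt_succ_self m⟩ : Fin (m+1)).rev)⁻¹ *ᵥ
          y ⟨m, Nat.lt_succ_self m⟩ = 0 :=
        funext fun k => congrFun h0 (⟨m, Nat.lt_succ_self m⟩, k)
      have h3 := vanish _ (isUnit_nonsing_inv_det _ (hN _)) h2
      rw [← hym]; exact h3
    · rw [system_iff m n M N hN μ]
      intro q
      have hyx : ∀ p : Fin (m+1),
          (N p.rev *ᵥ fun k => ((N p.rev)⁻¹ *ᵥ y p) k) = y p := by
        intro p
        show N p.rev *ᵥ ((N p.rev)⁻¹ *ᵥ y p) = y p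
        rw [mulVec_mulVec, mul_nonsing_inv _ (hN _), one_mulVec]
      show (N q.rev *ᵥ fun k => ((N q.rev)⁻¹ *ᵥ y q) k) =
        μ • ((M (q+1).rev * (N (q+1).rev)⁻¹) *ᵥ
          (N (q+1).rev *ᵥ fun k => ((N (q+1).rev)⁻¹ *ᵥ y (q+1)) k))
      rw [hyx, hyx]
      exact hS q

/-- If all the `N_i` are invertible then `det Q₁(0) ≠ 0` (in particular `Q₁` is a regular
pencil), and for every nonzero `λ₀`, `det Q₁(λ₀) = 0` iff `λ₀^{-r}` is an eigenvalue of
the formal product `Π = M_r N_r⁻¹ ⋯ M_1 N_1⁻¹`. -/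
theorem pencilQ1_det_eq_zero_iff (r n : ℕ) (hr : 1 ≤ r)
    (M N : Fin r → Matrix (Fin n) (Fin n) ℂ) (hN : ∀ i, IsUnit (N i).det) :
    (pencilQ1 r n M N 0).det ≠ 0 ∧
    (∃ μ : ℂ, (pencilQ1 r n M N μ).det ≠ 0) ∧
    (∀ μ : ℂ, μ ≠ 0 →
      ((pencilQ1 r n M N μ).det = 0 ↔
        (formalProd r n M N - (μ ^ r)⁻¹ • (1 : Matrix (Fin n) (Fin n) ℂ)).det = 0)) := by
  obtain ⟨m, rfl⟩ : ∃ m, r = m + 1 := ⟨r - 1, by omega⟩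
  have h1 : (pencilQ1 (m+1) n M N 0).det ≠ 0 := by
    rw [Ne, ← Matrix.exists_mulVec_eq_zero_iff]
    rintro ⟨x, hx0, hx⟩
    have hS := (system_iff m n M N hN 0 x).mp hx
    apply hx0
    funext pk
    obtain ⟨q, k⟩ := pk
    have hq := hS q
    rw [zero_smul] at hq
    exact congrFun (vanish (N q.rev) (hN _) hq) k
  exact ⟨h1, ⟨0, h1⟩, fun μ hμ => key m n M N hN μ hμ⟩
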